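/- For all complex numbers z with |z| ≤ 1, Σ_{m=0}^{∞} e_{E,m} z^m = Π_p (1 + (z−1)/(p(p+1))), the product running over all primes p. -/

import Mathlib

open scoped BigOperators

/-- A positive integer is *powerful* if every prime dividing it divides it with
multiplicity at least `2`. -/
def Powerful (f : ℕ) : Prop := 0 < f ∧ ∀ p : ℕ, p.Prime → p ∣ f → p ^ 2 ∣ f

/-- `ω_E(n)`: the number of primes dividing `n` with even multiplicity
(necessarily at least `2`). -/
def omegaE (n : ℕ) : ℕ :=
  (n.primeFactors.filter fun p => Even (n.factorization p)).card

/-- The density `e_{E,m}` of integers `n` with `ω_E(n) = m`. -/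
noncomputable def eEm (m : ℕ) : ℝ :=
  6 / Real.pi ^ 2 *
    ∑' f : {f : ℕ // Powerful f ∧ omegaE f = m},
      ((f : ℕ) : ℝ)⁻¹ * ∏ p ∈ (f : ℕ).primeFactors, (1 + 1 / (p : ℝ))⁻¹

/-! ### Auxiliary lemmas -/

section Aux

lemma powerful_one : Powerful 1 :=
  ⟨one_pos, fun _ hp hd => absurd (Nat.dvd_one.mp hd ▸ hp) Nat.not_prime_one⟩

lemma powerful_two_le_factorization {n p : ℕ} (h : Powerful n) (hp : p.Prime)
    (hd : p ∣ n) : 2 ≤ n.factorization p :=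
  (Nat.Prime.pow_dvd_iff_le_factorization hp h.1.ne').mp (h.2 p hp hd)

lemma powerful_exists {n : ℕ} (h : Powerful n) :
    ∃ a b : ℕ, 0 < a ∧ 0 < b ∧ a ^ 2 * b ^ 3 = n := by
  classical
  have hps : ∀ p ∈ n.factorization.support, p.Prime := fun p hp =>
    Nat.prime_of_mem_primeFactors (by rwa [Nat.support_factorization] at hp)
  refine ⟨n.factorization.prod fun p e => p ^ ((e - if Odd e then 3 else 0) / 2),
    n.factorization.prod fun p e => p ^ (if Odd e then 1 else 0), ?_, ?_, ?_⟩
  · exact Nat.pos_of_ne_zero <| Finsupp.prod_ne_zero_iff.mpr fun p hp =>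
      pow_ne_zero _ (hps p hp).pos.ne'
  · exact Nat.pos_of_ne_zero <| Finsupp.prod_ne_zero_iff.mpr fun p hp =>
      pow_ne_zero _ (hps p hp).pos.ne'
  · have hn := Nat.factorization_prod_pow_eq_self h.1.ne'
    rw [Finsupp.prod] at hn
    rw [Finsupp.prod, Finsupp.prod, ← Finset.prod_pow, ← Finset.prod_pow,
      ← Finset.prod_mul_distrib]
    conv_rhs => rw [← hn]
    refine Finset.prod_congr rfl fun p hp => ?_
    have h2 : 2 ≤ n.factorization p := by
      refine powerful_two_le_factorization h (hps p hp) (Nat.dvd_of_mem_primeFactors ?_)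
      rwa [Nat.support_factorization] at hp
    rw [← pow_mul, ← pow_mul, ← pow_add]
    congr 1
    set e := n.factorization p with he
    by_cases ho : Odd e
    · rw [if_pos ho, if_pos ho]; rw [Nat.odd_iff] at ho; omega
    · rw [if_neg ho, if_neg ho]
      rw [Nat.odd_iff] at ho; omega

lemma summable_aux : Summable (fun q : ℕ × ℕ =>
    (((q.1 + 1 : ℕ) : ℝ) ^ 2)⁻¹ * (((q.2 + 1 : ℕ) : ℝ) ^ 3)⁻¹) := by
  have h2 : Summable (fun a : ℕ => (((a + 1 : ℕ) : ℝ) ^ 2)⁻¹) := by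
    have := Real.summable_one_div_nat_pow.mpr (le_refl 2)
    simpa [one_div] using (summable_nat_add_iff 1).mpr this
  have h3 : Summable (fun b : ℕ => (((b + 1 : ℕ) : ℝ) ^ 3)⁻¹) := by
    have := Real.summable_one_div_nat_pow.mpr (by norm_num : 2 ≤ 3)
    simpa [one_div] using (summable_nat_add_iff 1).mpr this
  exact h2.mul_of_nonneg h3 (fun a => by positivity) (fun b => by positivity)

lemma summable_powerful_inv : Summable (fun n : {n : ℕ // Powerful n} => ((n : ℕ) : ℝ)⁻¹) := by
  choose A B hA hB hAB using fun n : {n : ℕ // Powerful n} => powerful_exists n.2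
  have hinj : Function.Injective (fun n : {n : ℕ // Powerful n} => (A n - 1, B n - 1)) := by
    intro m n h
    simp only [Prod.mk.injEq] at h
    have h1 : A m = A n := by have := hA m; have := hA n; omega
    have h2 : B m = B n := by have := hB m; have := hB n; omega
    exact Subtype.ext (by rw [← hAB m, ← hAB n, h1, h2])
  refine (summable_aux.comp_injective hinj).congr fun n => ?_
  simp only [Function.comp_apply]
  rw [Nat.sub_add_cancel (hA n), Nat.sub_add_cancel (hB n),
    ← mul_inv, ← Nat.cast_pow, ← Nat.cast_pow, ← Nat.cast_mul, hAB n]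

lemma powerful_mul {m n : ℕ} (h : Nat.Coprime m n) :
    Powerful (m * n) ↔ Powerful m ∧ Powerful n := by
  constructor
  · rintro ⟨hpos, hdvd⟩
    have hm : m ≠ 0 := by rintro rfl; simp at hpos
    have hn : n ≠ 0 := by rintro rfl; simp at hpos
    refine ⟨⟨Nat.pos_of_ne_zero hm, fun p hp hd => ?_⟩,
      ⟨Nat.pos_of_ne_zero hn, fun p hp hd => ?_⟩⟩
    · have h2 : p ^ 2 ∣ m * n := hdvd p hp (dvd_mul_of_dvd_left hd n)
      exact ((Nat.Coprime.coprime_dvd_left hd h).pow_left 2).dvd_of_dvd_mul_right h2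
    · have h2 : p ^ 2 ∣ m * n := hdvd p hp (dvd_mul_of_dvd_right hd m)
      exact ((Nat.Coprime.coprime_dvd_right hd h).pow_right 2).symm.dvd_of_dvd_mul_left h2
  · rintro ⟨⟨hm, hdm⟩, ⟨hn, hdn⟩⟩
    refine ⟨Nat.mul_pos hm hn, fun p hp hd => ?_⟩
    rcases hp.dvd_mul.mp hd with hdm' | hdn'
    · exact dvd_mul_of_dvd_left (hdm p hp hdm') n
    · exact dvd_mul_of_dvd_right (hdn p hp hdn') m

lemma omegaE_mul {m n : ℕ} (hm : m ≠ 0) (hn : n ≠ 0) (h : Nat.Coprime m n) :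
    omegaE (m * n) = omegaE m + omegaE n := by
  classical
  have hdis := Nat.Coprime.disjoint_primeFactors h
  have hfm : ∀ p ∈ m.primeFactors, (m * n).factorization p = m.factorization p := by
    intro p hp
    have hpn : p ∉ n.primeFactors := Finset.disjoint_left.mp hdis hp
    have : n.factorization p = 0 := by
      rw [← Nat.support_factorization] at hpn
      exact Finsupp.notMem_support_iff.mp hpn
    rw [Nat.factorization_mul hm hn]; simp [this]
  have hfn : ∀ p ∈ n.primeFactors, (m * n).factorization p = n.factorization p := by
    intro p hp
    have hpm : p ∉ m.primeFactors := Finset.disjoint_right.mp hdis hp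
    have : m.factorization p = 0 := by
      rw [← Nat.support_factorization] at hpm
      exact Finsupp.notMem_support_iff.mp hpm
    rw [Nat.factorization_mul hm hn]; simp [this]
  unfold omegaE
  rw [Nat.primeFactors_mul hm hn, Finset.filter_union,
    Finset.card_union_of_disjoint (Finset.disjoint_filter_filter hdis)]
  congr 1
  · rw [Finset.filter_congr (fun p hp => by rw [hfm p hp] : ∀ p ∈ m.primeFactors,
      Even ((m * n).factorization p) ↔ Even (m.factorization p))]
  · rw [Finset.filter_congr (fun p hp => by rw [hfn p hp] : ∀ p ∈ n.primeFactors,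
      Even ((m * n).factorization p) ↔ Even (n.factorization p))]

lemma powerful_prime_pow {p e : ℕ} (hp : p.Prime) (he : 2 ≤ e) : Powerful (p ^ e) := by
  refine ⟨pow_pos hp.pos e, fun q hq hd => ?_⟩
  have : q = p := (Nat.prime_dvd_prime_iff_eq hq hp).mp (hq.dvd_of_dvd_pow hd)
  exact this ▸ pow_dvd_pow p he

lemma not_powerful_prime {p : ℕ} (hp : p.Prime) : ¬ Powerful p := by
  rintro ⟨-, h⟩
  have := Nat.le_of_dvd hp.pos (h p hp dvd_rfl)
  nlinarith [hp.two_le]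

lemma omegaE_one : omegaE 1 = 0 := by simp [omegaE]

lemma omegaE_prime_pow {p e : ℕ} (hp : p.Prime) (he : e ≠ 0) :
    omegaE (p ^ e) = if Even e then 1 else 0 := by
  classical
  rw [omegaE, Nat.primeFactors_pow p he, hp.primeFactors, hp.factorization_pow]
  by_cases h : Even e <;>
    simp [h, Finset.filter_singleton, Finsupp.single_eq_same]

/-- The real weight function. -/
noncomputable def wfun (n : ℕ) : ℝ :=
  (n : ℝ)⁻¹ * ∏ p ∈ n.primeFactors, (1 + 1 / (p : ℝ))⁻¹

open Classical in
/-- The complex weighted multiplicative function. -/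
noncomputable def gfun (z : ℂ) (n : ℕ) : ℂ :=
  if Powerful n then z ^ omegaE n * ((wfun n : ℝ) : ℂ) else 0

lemma wfun_one : wfun 1 = 1 := by simp [wfun]

lemma wfun_nonneg (n : ℕ) : 0 ≤ wfun n := by
  refine mul_nonneg (by positivity) (Finset.prod_nonneg fun p _ => by positivity)

lemma wfun_le_inv (n : ℕ) : wfun n ≤ (n : ℝ)⁻¹ := by
  refine mul_le_of_le_one_right (by positivity) (Finset.prod_le_one ?_ ?_)
  · intro p _; positivity
  · intro p _
    rw [inv_le_one_iff₀]
    right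
    have : (0:ℝ) ≤ 1 / (p:ℝ) := by positivity
    linarith

lemma wfun_mul {m n : ℕ} (hm : m ≠ 0) (hn : n ≠ 0) (h : Nat.Coprime m n) :
    wfun (m * n) = wfun m * wfun n := by
  unfold wfun
  rw [Nat.primeFactors_mul hm hn,
    Finset.prod_union (Nat.Coprime.disjoint_primeFactors h), Nat.cast_mul, mul_inv]
  ring

lemma gfun_zero (z : ℂ) : gfun z 0 = 0 := by
  rw [gfun, if_neg]; rintro ⟨h, -⟩; exact lt_irrefl 0 h

lemma gfun_one (z : ℂ) : gfun z 1 = 1 := by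
  rw [gfun, if_pos powerful_one, omegaE_one, wfun_one]; simp

lemma gfun_mul (z : ℂ) {m n : ℕ} (h : Nat.Coprime m n) :
    gfun z (m * n) = gfun z m * gfun z n := by
  by_cases hP : Powerful m ∧ Powerful n
  · have hm : m ≠ 0 := hP.1.1.ne'
    have hn : n ≠ 0 := hP.2.1.ne'
    rw [gfun, gfun, gfun, if_pos ((powerful_mul h).mpr hP), if_pos hP.1, if_pos hP.2,
      omegaE_mul hm hn h, pow_add, wfun_mul hm hn h, Complex.ofReal_mul]
    ring
  · rw [gfun, if_neg (fun hc => hP ((powerful_mul h).mp hc))]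
    rcases not_and_or.mp hP with hc | hc
    · rw [show gfun z m = 0 by rw [gfun, if_neg hc], zero_mul]
    · rw [show gfun z n = 0 by rw [gfun, if_neg hc], mul_zero]

lemma gfun_norm_le (z : ℂ) (hz : ‖z‖ ≤ 1) (n : ℕ) :
    ‖gfun z n‖ ≤ Set.indicator {n : ℕ | Powerful n} (fun n => (n : ℝ)⁻¹) n := by
  rw [gfun]
  split_ifs with h
  · rw [Set.indicator_of_mem (show n ∈ {n : ℕ | Powerful n} from h) (fun n => ((n : ℝ))⁻¹),
      norm_mul, norm_pow, Complex.norm_real, Real.norm_eq_abs,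
      abs_of_nonneg (wfun_nonneg n)]
    calc ‖z‖ ^ omegaE n * wfun n ≤ 1 * wfun n := by
          exact mul_le_mul_of_nonneg_right (pow_le_one₀ (norm_nonneg z) hz) (wfun_nonneg n)
      _ ≤ (n : ℝ)⁻¹ := by rw [one_mul]; exact wfun_le_inv n
  · simp only [norm_zero]
    exact Set.indicator_apply_nonneg fun _ => by positivity

lemma wfun_prime_pow {p e : ℕ} (hp : p.Prime) (he : e ≠ 0) :
    wfun (p ^ e) = ((p : ℝ) ^ e)⁻¹ * (1 + 1 / (p : ℝ))⁻¹ := by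
  rw [wfun, Nat.primeFactors_pow p he, hp.primeFactors, Finset.prod_singleton, Nat.cast_pow]

lemma gfun_prime_pow_cast {z : ℂ} {p e : ℕ} (hp : p.Prime) (he2 : 2 ≤ e) :
    gfun z (p ^ e) = z ^ (if Even e then 1 else 0) * (((p : ℂ))⁻¹ ^ e * (1 + 1 / (p : ℂ))⁻¹) := by
  rw [gfun, if_pos (powerful_prime_pow hp he2), omegaE_prime_pow hp (by omega),
    wfun_prime_pow hp (by omega)]
  push_cast
  rw [inv_pow]

lemma even_part_eq (z : ℂ) {p : ℕ} (hp : p.Prime) :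
    (fun k => gfun z (p ^ (2 * k))) =
      Function.update (fun k : ℕ => z * (1 + 1 / (p : ℂ))⁻¹ * (((p : ℂ)⁻¹) ^ 2) ^ k) 0 1 := by
  funext k
  cases k with
  | zero => rw [mul_zero, pow_zero, gfun_one, Function.update_self]
  | succ k =>
    rw [Function.update_of_ne (Nat.succ_ne_zero k)]
    rw [gfun_prime_pow_cast hp (by omega), if_pos (even_two_mul (k + 1)), pow_one, ← pow_mul]
    simp only [Nat.succ_eq_add_one]
    ring

lemma odd_part_eq (z : ℂ) {p : ℕ} (hp : p.Prime) :
    (fun k => gfun z (p ^ (2 * k + 1))) =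
      Function.update (fun k : ℕ => (1 + 1 / (p : ℂ))⁻¹ * (p : ℂ)⁻¹ * (((p : ℂ)⁻¹) ^ 2) ^ k)
        0 0 := by
  funext k
  cases k with
  | zero =>
    rw [mul_zero, zero_add, pow_one, Function.update_self, gfun,
      if_neg (not_powerful_prime hp)]
  | succ k =>
    rw [Function.update_of_ne (Nat.succ_ne_zero k)]
    rw [gfun_prime_pow_cast hp (by omega), if_neg (by simp [Nat.even_add_one, parity_simps]),
      pow_zero, one_mul, pow_succ, ← pow_mul]
    simp only [Nat.succ_eq_add_one]
    ring

lemma hasSum_gfun_local (z : ℂ) {p : ℕ} (hp : p.Prime) :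
    HasSum (fun e : ℕ => gfun z (p ^ e))
      ((1 - ((p : ℂ)⁻¹) ^ 2)⁻¹ * (1 + (z - 1) / ((p : ℂ) * ((p : ℂ) + 1)))) := by
  have hp0 : (p : ℂ) ≠ 0 := Nat.cast_ne_zero.mpr hp.pos.ne'
  have hp1 : (p : ℂ) + 1 ≠ 0 := by
    have : ((p + 1 : ℕ) : ℂ) ≠ 0 := Nat.cast_ne_zero.mpr (Nat.succ_ne_zero p)
    push_cast at this; exact this
  have hpR : (1 : ℝ) < (p : ℝ) := by exact_mod_cast hp.one_lt
  have hq : ‖(p : ℂ)⁻¹‖ < 1 := by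
    rw [norm_inv, Complex.norm_natCast]
    exact inv_lt_one_of_one_lt₀ hpR
  have hq2 : ‖((p : ℂ)⁻¹) ^ 2‖ < 1 := by
    rw [norm_pow]
    exact pow_lt_one₀ (norm_nonneg _) hq two_ne_zero
  have h1q : 1 - ((p : ℂ)⁻¹) ^ 2 ≠ 0 := by
    refine sub_ne_zero_of_ne fun hc => ?_
    rw [← hc] at hq2; simp at hq2
  have ht : 1 + 1 / (p : ℂ) ≠ 0 := by
    have : 1 + 1 / (p : ℂ) = ((p : ℂ) + 1) / (p : ℂ) := by field_simp
    rw [this]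
    exact div_ne_zero hp1 hp0
  have hgeo := hasSum_geometric_of_norm_lt_one hq2
  have he := (hgeo.mul_left (z * (1 + 1 / (p : ℂ))⁻¹)).update 0 1
  rw [← even_part_eq z hp] at he
  have ho := (hgeo.mul_left ((1 + 1 / (p : ℂ))⁻¹ * (p : ℂ)⁻¹)).update 0 0
  rw [← odd_part_eq z hp] at ho
  have hsum := HasSum.even_add_odd (f := fun e => gfun z (p ^ e)) he ho
  have h2 : (p : ℂ) ^ 2 - 1 ≠ 0 := by
    intro hc
    have : ((p ^ 2 : ℕ) : ℂ) = ((1 : ℕ) : ℂ) := by push_cast; linear_combination hc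
    have h4 : p ^ 2 = 1 := Nat.cast_injective this
    nlinarith [hp.two_le]
  have e1 : (1 - ((p : ℂ))⁻¹ ^ 2)⁻¹ = (p : ℂ) ^ 2 / ((p : ℂ) ^ 2 - 1) := by
    rw [show 1 - ((p : ℂ))⁻¹ ^ 2 = ((p : ℂ) ^ 2 - 1) / (p : ℂ) ^ 2 by field_simp, inv_div]
  have e2 : (1 + 1 / (p : ℂ))⁻¹ = (p : ℂ) / ((p : ℂ) + 1) := by
    rw [show 1 + 1 / (p : ℂ) = ((p : ℂ) + 1) / (p : ℂ) by field_simp, inv_div]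
  convert hsum using 1
  simp only [pow_zero, mul_one]
  rw [e1, e2, ← sub_eq_zero]
  field_simp
  ring

lemma one_sub_inv_sq_ne_zero {p : ℕ} (hp : p.Prime) : 1 - ((p : ℂ)⁻¹) ^ 2 ≠ 0 := by
  have hpR : (1 : ℝ) < (p : ℝ) := by exact_mod_cast hp.one_lt
  have hq : ‖(p : ℂ)⁻¹‖ < 1 := by
    rw [norm_inv, Complex.norm_natCast]
    exact inv_lt_one_of_one_lt₀ hpR
  have hq2 : ‖((p : ℂ)⁻¹) ^ 2‖ < 1 := by
    rw [norm_pow]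
    exact pow_lt_one₀ (norm_nonneg _) hq two_ne_zero
  refine sub_ne_zero_of_ne fun hc => ?_
  rw [← hc] at hq2; simp at hq2

lemma hasProd_inv_of_hasProd {ι : Type*} {f : ι → ℂ} {a : ℂ} (h : HasProd f a) (ha : a ≠ 0) :
    HasProd (fun i => (f i)⁻¹) a⁻¹ := by
  have := Filter.Tendsto.inv₀ h ha
  simpa [HasProd, Finset.prod_inv_distrib] using this

end Aux

set_option maxHeartbeats 2000000 in
theorem eEm_generating_function (z : ℂ) (hz : ‖z‖ ≤ 1) :
    ∃ P : ℂ,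
      HasProd (fun p : Nat.Primes =>
        1 + (z - 1) / (((p : ℕ) : ℂ) * (((p : ℕ) : ℂ) + 1))) P ∧
      HasSum (fun m : ℕ => (eEm m : ℂ) * z ^ m) P := by
  classical
  -- summability of the norm of `gfun z`
  have hind : Summable (Set.indicator {n : ℕ | Powerful n} (fun n => ((n : ℕ) : ℝ)⁻¹)) := by
    rw [← summable_subtype_iff_indicator]
    exact summable_powerful_inv
  have hnorm : Summable (fun n : ℕ => ‖gfun z n‖) :=
    Summable.of_nonneg_of_le (fun n => norm_nonneg _) (gfun_norm_le z hz) hind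
  have hgsum : Summable (gfun z) := hnorm.of_norm
  set S : ℂ := ∑' n, gfun z n with hSdef
  -- the Euler product for `gfun z`
  have hEuler : HasProd (fun p : Nat.Primes => ∑' e : ℕ, gfun z ((p : ℕ) ^ e)) S :=
    EulerProduct.eulerProduct_hasProd (gfun_one z) (fun {m n} h => gfun_mul z h)
      hnorm (gfun_zero z)
  have hloc : (fun p : Nat.Primes => ∑' e : ℕ, gfun z ((p : ℕ) ^ e)) =
      (fun p : Nat.Primes => (1 - (((p : ℕ) : ℂ)⁻¹) ^ 2)⁻¹ *
        (1 + (z - 1) / (((p : ℕ) : ℂ) * (((p : ℕ) : ℂ) + 1)))) :=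
    funext fun p => (hasSum_gfun_local z p.2).tsum_eq
  rw [hloc] at hEuler
  -- the Euler product for `ζ(2)⁻¹`
  have hzne : riemannZeta 2 ≠ 0 := by
    rw [riemannZeta_two]
    exact div_ne_zero (pow_ne_zero 2 (Complex.ofReal_ne_zero.mpr Real.pi_ne_zero))
      (by norm_num)
  have hzeta := riemannZeta_eulerProduct_hasProd (s := 2) (by norm_num)
  have hinv := hasProd_inv_of_hasProd hzeta hzne
  have hfe : (fun p : Nat.Primes => ((1 - (((p : ℕ) : ℂ)) ^ (-2 : ℂ))⁻¹)⁻¹) =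
      (fun p : Nat.Primes => 1 - (((p : ℕ) : ℂ)⁻¹) ^ 2) := by
    funext p
    rw [inv_inv, show ((-2 : ℂ)) = -((2 : ℕ) : ℂ) by norm_num, Complex.cpow_neg,
      Complex.cpow_natCast, inv_pow]
  rw [hfe] at hinv
  -- multiply the two Euler products
  have hmulP := hinv.mul hEuler
  have hmain : HasProd (fun p : Nat.Primes =>
      1 + (z - 1) / (((p : ℕ) : ℂ) * (((p : ℕ) : ℂ) + 1))) ((riemannZeta 2)⁻¹ * S) := by
    have hfe2 : (fun p : Nat.Primes =>
        (1 - (((p : ℕ) : ℂ)⁻¹) ^ 2) * ((1 - (((p : ℕ) : ℂ)⁻¹) ^ 2)⁻¹ *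
          (1 + (z - 1) / (((p : ℕ) : ℂ) * (((p : ℕ) : ℂ) + 1))))) =
        (fun p : Nat.Primes => 1 + (z - 1) / (((p : ℕ) : ℂ) * (((p : ℕ) : ℂ) + 1))) :=
      funext fun p => mul_inv_cancel_left₀ (one_sub_inv_sq_ne_zero p.2) _
    rwa [hfe2] at hmulP
  -- the constant
  set c : ℂ := ((6 / Real.pi ^ 2 : ℝ) : ℂ) with hcdef
  have hc : (riemannZeta 2)⁻¹ = c := by
    rw [riemannZeta_two, inv_div, hcdef]
    push_cast
    ring
  rw [hc] at hmain
  -- now the sum side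
  have hsupp : Function.support (gfun z) ⊆ {n : ℕ | Powerful n} := by
    intro n hn
    by_contra hc2
    have hc3 : ¬ Powerful n := hc2
    exact hn (by rw [gfun, if_neg hc3])
  have hsubS : HasSum (fun n : {n : ℕ // Powerful n} => gfun z n.1) S :=
    (hasSum_subtype_iff_of_support_subset hsupp).mpr hgsum.hasSum
  let E : {n : ℕ // Powerful n} ≃ Σ m : ℕ, {f : ℕ // Powerful f ∧ omegaE f = m} :=
    { toFun := fun n => ⟨omegaE n.1, ⟨n.1, n.2, rfl⟩⟩
      invFun := fun x => ⟨x.2.1, x.2.2.1⟩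
      left_inv := fun n => rfl
      right_inv := fun x => by
        obtain ⟨m, f, hf, hm⟩ := x
        subst hm
        rfl }
  have hsigma : HasSum
      (fun x : Σ m : ℕ, {f : ℕ // Powerful f ∧ omegaE f = m} => gfun z x.2.1) S :=
    (E.symm.hasSum_iff).mpr hsubS
  -- fiberwise sums
  have hwsub : Summable (fun n : {n : ℕ // Powerful n} => wfun n.1) :=
    Summable.of_nonneg_of_le (fun n => wfun_nonneg _) (fun n => wfun_le_inv _)
      summable_powerful_inv
  have hfib : ∀ m : ℕ, Summable (fun f : {f : ℕ // Powerful f ∧ omegaE f = m} => wfun f.1) :=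
    fun m => hwsub.comp_injective
      (i := fun f : {f : ℕ // Powerful f ∧ omegaE f = m} =>
        (⟨f.1, f.2.1⟩ : {n : ℕ // Powerful n}))
      (fun a b hab => Subtype.ext (congrArg (fun x : {n : ℕ // Powerful n} => (x : ℕ)) hab))
  have hWm : ∀ m : ℕ, HasSum (fun f : {f : ℕ // Powerful f ∧ omegaE f = m} => gfun z f.1)
      (z ^ m * ((∑' f : {f : ℕ // Powerful f ∧ omegaE f = m}, wfun f.1 : ℝ) : ℂ)) := by
    intro m
    have h1 : HasSum (fun f : {f : ℕ // Powerful f ∧ omegaE f = m} => ((wfun f.1 : ℝ) : ℂ))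
        ((∑' f : {f : ℕ // Powerful f ∧ omegaE f = m}, wfun f.1 : ℝ) : ℂ) :=
      Complex.hasSum_ofReal.mpr (hfib m).hasSum
    have h2 := h1.mul_left (z ^ m)
    have hfe3 : (fun f : {f : ℕ // Powerful f ∧ omegaE f = m} => gfun z f.1) =
        (fun f : {f : ℕ // Powerful f ∧ omegaE f = m} => z ^ m * ((wfun f.1 : ℝ) : ℂ)) := by
      funext f
      rw [gfun, if_pos f.2.1, f.2.2]
    rw [hfe3]
    exact h2
  have hTot : HasSum (fun m : ℕ =>
      z ^ m * ((∑' f : {f : ℕ // Powerful f ∧ omegaE f = m}, wfun f.1 : ℝ) : ℂ)) S :=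
    HasSum.sigma hsigma (fun m => hWm m)
  have hFin := hTot.mul_left c
  have hfe4 : (fun m : ℕ => c *
      (z ^ m * ((∑' f : {f : ℕ // Powerful f ∧ omegaE f = m}, wfun f.1 : ℝ) : ℂ))) =
      (fun m : ℕ => (eEm m : ℂ) * z ^ m) := by
    funext m
    have : eEm m = 6 / Real.pi ^ 2 *
        ∑' f : {f : ℕ // Powerful f ∧ omegaE f = m}, wfun f.1 := rfl
    rw [this, Complex.ofReal_mul, hcdef]
    ring
  rw [hfe4] at hFin
  exact ⟨c * S, hmain, hFin⟩
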